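/- Let μ = (1/2) N(-r, γ²) + (1/2) N(r, γ²) with r ≥ 0 and γ ∈ (0,1). Then the function y ↦ f(t,y) - y/(1+t) is nonincreasing in y for all t ≥ 0 if and only if r ≤ γ√(1-γ²), where f(t,y) = ∫ u e^{uy - u²t/2} μ(du) / ∫ e^{uy - u²t/2} μ(du). -/

import Mathlib

open Real Set MeasureTheory ProbabilityTheory
open scoped NNReal ENNReal

section aux

lemma pdf_tilt (γ t y m : ℝ) (hγ : 0 < γ) (ht : 0 ≤ t) (u : ℝ) :
    Real.exp (u*y - u^2*t/2) * gaussianPDFReal m ⟨γ^2, sq_nonneg γ⟩ u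
    = (Real.exp ((γ^2*y+m)^2/(2*γ^2*(1+t*γ^2)) - m^2/(2*γ^2)) / Real.sqrt (1+t*γ^2))
      * gaussianPDFReal ((γ^2*y+m)/(1+t*γ^2))
          ⟨γ^2/(1+t*γ^2), by positivity⟩ u := by
  have hD : (0:ℝ) < 1 + t*γ^2 := by positivity
  have hγ2 : (0:ℝ) < γ^2 := by positivity
  simp only [gaussianPDFReal, NNReal.coe_mk, NNReal.toReal]
  rw [show 2*π*(γ^2/(1+t*γ^2)) = (2*π*γ^2)/(1+t*γ^2) by ring,
    Real.sqrt_div (by positivity)]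
  have h1 : Real.sqrt (2*π*γ^2) ≠ 0 := by positivity
  have h2 : Real.sqrt (1+t*γ^2) ≠ 0 := by positivity
  have key : (u*y - u^2*t/2) + (-(u-m)^2/(2*γ^2))
      = ((γ^2*y+m)^2/(2*γ^2*(1+t*γ^2)) - m^2/(2*γ^2))
        + (-(u - (γ^2*y+m)/(1+t*γ^2))^2/(2*(γ^2/(1+t*γ^2)))) := by
    field_simp
    ring
  calc Real.exp (u*y - u^2*t/2) * ((Real.sqrt (2*π*γ^2))⁻¹ * Real.exp (-(u-m)^2/(2*γ^2)))
      = (Real.sqrt (2*π*γ^2))⁻¹ * Real.exp ((u*y - u^2*t/2) + (-(u-m)^2/(2*γ^2))) := by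
        rw [Real.exp_add]; ring
    _ = (Real.sqrt (2*π*γ^2))⁻¹
        * (Real.exp ((γ^2*y+m)^2/(2*γ^2*(1+t*γ^2)) - m^2/(2*γ^2))
          * Real.exp (-(u - (γ^2*y+m)/(1+t*γ^2))^2/(2*(γ^2/(1+t*γ^2))))) := by
        rw [key, Real.exp_add]
    _ = (Real.exp ((γ^2*y+m)^2/(2*γ^2*(1+t*γ^2)) - m^2/(2*γ^2)) / Real.sqrt (1+t*γ^2))
        * ((Real.sqrt (2*π*γ^2) / Real.sqrt (1+t*γ^2))⁻¹
          * Real.exp (-(u - (γ^2*y+m)/(1+t*γ^2))^2/(2*(γ^2/(1+t*γ^2))))) := by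
        field_simp

lemma integral_gaussianReal_eq (m : ℝ) {v : ℝ≥0} (hv : v ≠ 0) (g : ℝ → ℝ) :
    ∫ u, g u ∂gaussianReal m v = ∫ u, gaussianPDFReal m v u * g u := by
  rw [gaussianReal_of_var_ne_zero m hv, gaussianPDF_def]
  have : (fun x => ENNReal.ofReal (gaussianPDFReal m v x))
      = fun x => ((gaussianPDFReal m v x).toNNReal : ℝ≥0∞) := rfl
  rw [this, integral_withDensity_eq_integral_smul
    ((measurable_gaussianPDFReal m v).real_toNNReal) g]
  congr 1
  funext u
  simp [NNReal.smul_def, Real.coe_toNNReal _ (gaussianPDFReal_nonneg m v u)]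

lemma integrable_gaussianReal_iff (m : ℝ) {v : ℝ≥0} (hv : v ≠ 0) (g : ℝ → ℝ) :
    Integrable g (gaussianReal m v) ↔
      Integrable (fun u => gaussianPDFReal m v u * g u) volume := by
  rw [gaussianReal_of_var_ne_zero m hv, gaussianPDF_def]
  have : (fun x => ENNReal.ofReal (gaussianPDFReal m v x))
      = fun x => ((gaussianPDFReal m v x).toNNReal : ℝ≥0∞) := rfl
  rw [this, integrable_withDensity_iff_integrable_smul
    ((measurable_gaussianPDFReal m v).real_toNNReal)]
  constructor <;> intro h <;> refine h.congr (Filter.Eventually.of_forall fun u => ?_) <;>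
    simp [NNReal.smul_def, Real.coe_toNNReal _ (gaussianPDFReal_nonneg m v u)]

lemma integral_id_mul_pdf {v : ℝ≥0} (hv : v ≠ 0) (c : ℝ) :
    ∫ u, u * gaussianPDFReal c v u = c := by
  have hv' : (0:ℝ) < v := by positivity
  have h0 : ∀ u : ℝ, gaussianPDFReal c v (u + c) = gaussianPDFReal 0 v u := by
    intro u; simp [gaussianPDFReal]
  have hint1 : Integrable (fun u : ℝ => u * gaussianPDFReal 0 v u) := by
    have : (fun u : ℝ => u * gaussianPDFReal 0 v u)
        = fun u => (Real.sqrt (2*π*v))⁻¹ * (u * Real.exp (-(1/(2*v)) * u^2)) := by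
      funext u; simp [gaussianPDFReal]; ring_nf
    rw [this]
    exact (integrable_mul_exp_neg_mul_sq (by positivity)).const_mul _
  have hint2 : Integrable (fun u : ℝ => c * gaussianPDFReal 0 v u) :=
    (integrable_gaussianPDFReal 0 v).const_mul c
  have hodd : ∫ u, u * gaussianPDFReal 0 v u = 0 := by
    have h := integral_neg_eq_self (fun u : ℝ => u * gaussianPDFReal 0 v u) volume
    have h2 : (fun u : ℝ => (-u) * gaussianPDFReal 0 v (-u))
        = fun u => -(u * gaussianPDFReal 0 v u) := by
      funext u; simp [gaussianPDFReal]
    rw [h2, integral_neg] at h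
    linarith
  calc ∫ u, u * gaussianPDFReal c v u
      = ∫ u, (u + c) * gaussianPDFReal c v (u + c) := (integral_add_right_eq_self _ c).symm
    _ = ∫ u, (u * gaussianPDFReal 0 v u + c * gaussianPDFReal 0 v u) := by
        congr 1; funext u; rw [h0]; ring
    _ = 0 + c * 1 := by
        rw [integral_add hint1 hint2, hodd, integral_const_mul,
          integral_gaussianPDFReal_eq_one 0 hv]
    _ = c := by ring

lemma integrable_id_mul_pdf {v : ℝ≥0} (hv : v ≠ 0) (c : ℝ) :
    Integrable (fun u : ℝ => u * gaussianPDFReal c v u) := by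
  have hv' : (0:ℝ) < v := by positivity
  have h0 : ∀ u : ℝ, gaussianPDFReal c v (u + c) = gaussianPDFReal 0 v u := by
    intro u; simp [gaussianPDFReal]
  have hint1 : Integrable (fun u : ℝ => u * gaussianPDFReal 0 v u) := by
    have : (fun u : ℝ => u * gaussianPDFReal 0 v u)
        = fun u => (Real.sqrt (2*π*v))⁻¹ * (u * Real.exp (-(1/(2*v)) * u^2)) := by
      funext u; simp [gaussianPDFReal]; ring_nf
    rw [this]
    exact (integrable_mul_exp_neg_mul_sq (by positivity)).const_mul _
  have hint2 : Integrable (fun u : ℝ => c * gaussianPDFReal 0 v u) :=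
    (integrable_gaussianPDFReal 0 v).const_mul c
  have hg : Integrable (fun u : ℝ => (u + c) * gaussianPDFReal c v (u + c)) := by
    refine ((hint1.add hint2).congr (Filter.Eventually.of_forall fun u => ?_))
    simp only [Pi.add_apply]
    rw [← h0]; ring
  have := hg.comp_add_right (-c)
  refine this.congr (Filter.Eventually.of_forall fun u => ?_)
  simp

lemma hvγ_ne (γ : ℝ) (hγ : 0 < γ) : (⟨γ^2, sq_nonneg γ⟩ : ℝ≥0) ≠ 0 := by
  intro h
  have h2 := congrArg (fun x : ℝ≥0 => (x : ℝ)) h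
  change γ^2 = 0 at h2
  exact absurd h2 (pow_ne_zero 2 hγ.ne')

lemma hvs_ne (γ t : ℝ) (hγ : 0 < γ) (ht : 0 ≤ t) :
    (⟨γ^2/(1+t*γ^2), by positivity⟩ : ℝ≥0) ≠ 0 := by
  have hD : (0:ℝ) < 1 + t*γ^2 := by positivity
  intro h
  have h2 := congrArg (fun x : ℝ≥0 => (x : ℝ)) h
  change γ^2/(1+t*γ^2) = 0 at h2
  exact absurd h2 (ne_of_gt (by positivity))

lemma comp_exp_eq (γ t y m : ℝ) (hγ : 0 < γ) (ht : 0 ≤ t) :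
    ∫ u, Real.exp (u*y - u^2*t/2) ∂gaussianReal m ⟨γ^2, sq_nonneg γ⟩
    = Real.exp ((γ^2*y+m)^2/(2*γ^2*(1+t*γ^2)) - m^2/(2*γ^2)) / Real.sqrt (1+t*γ^2) := by
  rw [integral_gaussianReal_eq m (hvγ_ne γ hγ)]
  have : ∀ u : ℝ, gaussianPDFReal m ⟨γ^2, sq_nonneg γ⟩ u * Real.exp (u*y - u^2*t/2)
      = (Real.exp ((γ^2*y+m)^2/(2*γ^2*(1+t*γ^2)) - m^2/(2*γ^2)) / Real.sqrt (1+t*γ^2))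
        * gaussianPDFReal ((γ^2*y+m)/(1+t*γ^2)) ⟨γ^2/(1+t*γ^2), by positivity⟩ u := by
    intro u; rw [mul_comm]; exact pdf_tilt γ t y m hγ ht u
  simp_rw [this, integral_const_mul,
    integral_gaussianPDFReal_eq_one _ (hvs_ne γ t hγ ht), mul_one]

lemma comp_id_eq (γ t y m : ℝ) (hγ : 0 < γ) (ht : 0 ≤ t) :
    ∫ u, u * Real.exp (u*y - u^2*t/2) ∂gaussianReal m ⟨γ^2, sq_nonneg γ⟩
    = (Real.exp ((γ^2*y+m)^2/(2*γ^2*(1+t*γ^2)) - m^2/(2*γ^2)) / Real.sqrt (1+t*γ^2))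
      * ((γ^2*y+m)/(1+t*γ^2)) := by
  rw [integral_gaussianReal_eq m (hvγ_ne γ hγ)]
  have : ∀ u : ℝ, gaussianPDFReal m ⟨γ^2, sq_nonneg γ⟩ u * (u * Real.exp (u*y - u^2*t/2))
      = (Real.exp ((γ^2*y+m)^2/(2*γ^2*(1+t*γ^2)) - m^2/(2*γ^2)) / Real.sqrt (1+t*γ^2))
        * (u * gaussianPDFReal ((γ^2*y+m)/(1+t*γ^2)) ⟨γ^2/(1+t*γ^2), by positivity⟩ u) := by
    intro u
    have := pdf_tilt γ t y m hγ ht u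
    calc gaussianPDFReal m ⟨γ^2, sq_nonneg γ⟩ u * (u * Real.exp (u*y - u^2*t/2))
        = u * (Real.exp (u*y - u^2*t/2) * gaussianPDFReal m ⟨γ^2, sq_nonneg γ⟩ u) := by ring
      _ = _ := by rw [this]; ring
  simp_rw [this, integral_const_mul, integral_id_mul_pdf (hvs_ne γ t hγ ht)]

lemma comp_exp_integrable (γ t y m : ℝ) (hγ : 0 < γ) (ht : 0 ≤ t) :
    Integrable (fun u => Real.exp (u*y - u^2*t/2)) (gaussianReal m ⟨γ^2, sq_nonneg γ⟩) := by
  rw [integrable_gaussianReal_iff m (hvγ_ne γ hγ)]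
  have : ∀ u : ℝ, gaussianPDFReal m ⟨γ^2, sq_nonneg γ⟩ u * Real.exp (u*y - u^2*t/2)
      = (Real.exp ((γ^2*y+m)^2/(2*γ^2*(1+t*γ^2)) - m^2/(2*γ^2)) / Real.sqrt (1+t*γ^2))
        * gaussianPDFReal ((γ^2*y+m)/(1+t*γ^2)) ⟨γ^2/(1+t*γ^2), by positivity⟩ u := by
    intro u; rw [mul_comm]; exact pdf_tilt γ t y m hγ ht u
  refine (((integrable_gaussianPDFReal ((γ^2*y+m)/(1+t*γ^2))
      ⟨γ^2/(1+t*γ^2), by positivity⟩).const_mul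
      (Real.exp ((γ^2*y+m)^2/(2*γ^2*(1+t*γ^2)) - m^2/(2*γ^2)) / Real.sqrt (1+t*γ^2))).congr
    (Filter.Eventually.of_forall fun u => ?_))
  exact (this u).symm

lemma comp_id_integrable (γ t y m : ℝ) (hγ : 0 < γ) (ht : 0 ≤ t) :
    Integrable (fun u => u * Real.exp (u*y - u^2*t/2)) (gaussianReal m ⟨γ^2, sq_nonneg γ⟩) := by
  rw [integrable_gaussianReal_iff m (hvγ_ne γ hγ)]
  refine (((integrable_id_mul_pdf (hvs_ne γ t hγ ht)
      ((γ^2*y+m)/(1+t*γ^2))).const_mul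
      (Real.exp ((γ^2*y+m)^2/(2*γ^2*(1+t*γ^2)) - m^2/(2*γ^2)) / Real.sqrt (1+t*γ^2))).congr
    (Filter.Eventually.of_forall fun u => ?_))
  have := pdf_tilt γ t y m hγ ht u
  calc (Real.exp ((γ^2*y+m)^2/(2*γ^2*(1+t*γ^2)) - m^2/(2*γ^2)) / Real.sqrt (1+t*γ^2))
        * (u * gaussianPDFReal ((γ^2*y+m)/(1+t*γ^2)) ⟨γ^2/(1+t*γ^2), by positivity⟩ u)
      = u * ((Real.exp ((γ^2*y+m)^2/(2*γ^2*(1+t*γ^2)) - m^2/(2*γ^2)) / Real.sqrt (1+t*γ^2))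
        * gaussianPDFReal ((γ^2*y+m)/(1+t*γ^2)) ⟨γ^2/(1+t*γ^2), by positivity⟩ u) := by ring
    _ = _ := by rw [← this]; ring

lemma tanh_formula (x : ℝ) : Real.tanh x = (Real.exp (2*x) - 1)/(Real.exp (2*x) + 1) := by
  rw [Real.tanh_eq_sinh_div_cosh, Real.sinh_eq, Real.cosh_eq, Real.exp_neg, two_mul,
    Real.exp_add]
  have h1 : Real.exp x ≠ 0 := (Real.exp_pos x).ne'
  have h2 : Real.exp x + (Real.exp x)⁻¹ ≠ 0 := by positivity
  have h3 : Real.exp x * Real.exp x + 1 ≠ 0 := by positivity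
  field_simp

lemma hasDerivAt_tanh (x : ℝ) : HasDerivAt Real.tanh (1 - Real.tanh x ^ 2) x := by
  have h := (Real.hasDerivAt_sinh x).div (Real.hasDerivAt_cosh x) (Real.cosh_pos x).ne'
  have heq : (Real.sinh / Real.cosh) = Real.tanh := by
    funext z; rw [Pi.div_apply, Real.tanh_eq_sinh_div_cosh]
  rw [heq] at h
  refine h.congr_deriv (Eq.symm ?_)
  have hc := Real.cosh_sq_sub_sinh_sq x
  have hcne : Real.cosh x ≠ 0 := (Real.cosh_pos x).ne'
  rw [Real.tanh_eq_sinh_div_cosh]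
  field_simp

lemma deriv_nonpos_of_antitone {f : ℝ → ℝ} {d x : ℝ} (hf : Antitone f)
    (hd : HasDerivAt f d x) : d ≤ 0 := by
  have h := hasDerivAt_iff_tendsto_slope.mp hd
  have h2 : Filter.Tendsto (slope f x) (nhdsWithin x (Ioi x)) (nhds d) :=
    h.mono_left (nhdsWithin_mono x fun y hy => ne_of_gt hy)
  refine le_of_tendsto h2 ?_
  filter_upwards [self_mem_nhdsWithin] with y hy
  rw [slope_def_field]
  have : f y ≤ f x := hf (le_of_lt hy)
  exact div_nonpos_iff.mpr (Or.inr ⟨by linarith, by linarith [hy.out]⟩)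

end aux

/-- The symmetric two-component Gaussian mixture `(1/2) N(-r, γ²) + (1/2) N(r, γ²)`. -/
noncomputable def mixGauss (r γ : ℝ) : Measure ℝ :=
  (1 / 2 : ENNReal) • gaussianReal (-r) ⟨γ ^ 2, sq_nonneg γ⟩ +
    (1 / 2 : ENNReal) • gaussianReal r ⟨γ ^ 2, sq_nonneg γ⟩

/-- The posterior mean function `f(t,y)` for the prior `μ`. -/
noncomputable def fpost (μ : Measure ℝ) (t y : ℝ) : ℝ :=
  (∫ u, u * Real.exp (u * y - u ^ 2 * t / 2) ∂μ) /
    ∫ u, Real.exp (u * y - u ^ 2 * t / 2) ∂μ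

lemma fpost_formula (r γ : ℝ) (hγ : 0 < γ) (t y : ℝ) (ht : 0 ≤ t) :
    fpost (mixGauss r γ) t y
      = γ^2*y/(1+t*γ^2) + (r/(1+t*γ^2)) * Real.tanh ((r/(1+t*γ^2))*y) := by
  have hD : (0:ℝ) < 1 + t*γ^2 := by positivity
  have htop : (1/2 : ℝ≥0∞) ≠ ⊤ := by norm_num
  have hmix : ∀ g : ℝ → ℝ,
      (∀ m : ℝ, Integrable g (gaussianReal m ⟨γ^2, sq_nonneg γ⟩)) →
      ∫ u, g u ∂mixGauss r γ
        = (1/2) * (∫ u, g u ∂gaussianReal (-r) ⟨γ^2, sq_nonneg γ⟩)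
          + (1/2) * (∫ u, g u ∂gaussianReal r ⟨γ^2, sq_nonneg γ⟩) := by
    intro g hg
    rw [mixGauss, integral_add_measure ((hg (-r)).smul_measure htop)
      ((hg r).smul_measure htop), integral_smul_measure, integral_smul_measure]
    norm_num
  rw [fpost, hmix _ (fun m => comp_id_integrable γ t y m hγ ht),
    hmix _ (fun m => comp_exp_integrable γ t y m hγ ht),
    comp_id_eq γ t y (-r) hγ ht, comp_id_eq γ t y r hγ ht,
    comp_exp_eq γ t y (-r) hγ ht, comp_exp_eq γ t y r hγ ht]
  set D := 1 + t*γ^2 with hDdef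
  have hsD : Real.sqrt D ≠ 0 := by positivity
  have hexp : Real.exp ((γ^2*y+r)^2/(2*γ^2*D) - r^2/(2*γ^2))
      = Real.exp ((γ^2*y+(-r))^2/(2*γ^2*D) - (-r)^2/(2*γ^2)) * Real.exp (2*(r/D*y)) := by
    rw [← Real.exp_add]
    congr 1
    have hγ2 : γ^2 ≠ 0 := by positivity
    field_simp
    ring
  rw [tanh_formula, hexp]
  set P := Real.exp ((γ^2*y+(-r))^2/(2*γ^2*D) - (-r)^2/(2*γ^2)) with hP
  set e := Real.exp (2*(r/D*y)) with he
  have hPpos : 0 < P := Real.exp_pos _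
  have hepos : 0 < e := Real.exp_pos _
  have h1 : (0:ℝ) < e + 1 := by linarith
  have hden : (1/2) * (P/Real.sqrt D) + (1/2) * (P*e/Real.sqrt D) ≠ 0 := by
    have : (0:ℝ) < (1/2) * (P/Real.sqrt D) + (1/2) * (P*e/Real.sqrt D) := by
      have hsD' : (0:ℝ) < Real.sqrt D := Real.sqrt_pos.mpr hD
      positivity
    exact this.ne'
  rw [show (2:ℝ)*(r/D*y) = 2*(r/D)*y by ring] at *
  field_simp
  ring

theorem stmt15 (r γ : ℝ) (hr : 0 ≤ r) (hγ : γ ∈ Set.Ioo (0 : ℝ) 1) :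
    (∀ t : ℝ, 0 ≤ t →
        Antitone (fun y : ℝ => fpost (mixGauss r γ) t y - y / (1 + t))) ↔
      r ≤ γ * Real.sqrt (1 - γ ^ 2) := by
  obtain ⟨hγ0, hγ1⟩ := hγ
  have hγ2lt : γ^2 < 1 := by nlinarith
  have hγ2 : (0:ℝ) < γ^2 := by positivity
  -- the explicit form of the function
  have hfun : ∀ t : ℝ, 0 ≤ t →
      (fun y : ℝ => fpost (mixGauss r γ) t y - y / (1 + t))
      = fun y : ℝ => γ^2/(1+t*γ^2)*y
          + (r/(1+t*γ^2)) * Real.tanh ((r/(1+t*γ^2))*y) - (1/(1+t))*y := by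
    intro t ht
    funext y
    rw [fpost_formula r γ hγ0 t y ht]
    ring
  -- the derivative
  have hderiv : ∀ t : ℝ, 0 ≤ t → ∀ y : ℝ,
      HasDerivAt (fun y : ℝ => γ^2/(1+t*γ^2)*y
          + (r/(1+t*γ^2)) * Real.tanh ((r/(1+t*γ^2))*y) - (1/(1+t))*y)
        (γ^2/(1+t*γ^2) + (r/(1+t*γ^2))^2 * (1 - Real.tanh ((r/(1+t*γ^2))*y)^2)
          - 1/(1+t)) y := by
    intro t ht y
    set b := r/(1+t*γ^2) with hb
    have h1 : HasDerivAt (fun y : ℝ => γ^2/(1+t*γ^2)*y) (γ^2/(1+t*γ^2)) y := by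
      simpa using (hasDerivAt_id y).const_mul (γ^2/(1+t*γ^2))
    have h2 : HasDerivAt (fun y : ℝ => b*y) b y := by
      simpa using (hasDerivAt_id y).const_mul b
    have h3 : HasDerivAt (fun y : ℝ => Real.tanh (b*y))
        ((1 - Real.tanh (b*y)^2) * b) y := (hasDerivAt_tanh (b*y)).comp y h2
    have h4 : HasDerivAt (fun y : ℝ => (1/(1+t))*y) (1/(1+t)) y := by
      simpa using (hasDerivAt_id y).const_mul (1/(1+t))
    have h5 := (h1.add (h3.const_mul b)).sub h4
    exact h5.congr_deriv (by ring)
  constructor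
  · -- forward direction
    intro H
    have hK : ∀ t : ℝ, 0 ≤ t → (γ^2*(1+t*γ^2) + r^2)*(1+t) ≤ (1+t*γ^2)^2 := by
      intro t ht
      have hD : (0:ℝ) < 1+t*γ^2 := by positivity
      have h1t : (0:ℝ) < 1+t := by linarith
      have hA : Antitone (fun y : ℝ => γ^2/(1+t*γ^2)*y
          + (r/(1+t*γ^2)) * Real.tanh ((r/(1+t*γ^2))*y) - (1/(1+t))*y) := by
        rw [← hfun t ht]; exact H t ht
      have hd := deriv_nonpos_of_antitone hA (hderiv t ht 0)
      rw [mul_zero, Real.tanh_zero] at hd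
      have hd2 : γ^2/(1+t*γ^2) + (r/(1+t*γ^2))^2 ≤ 1/(1+t) := by
        have h0 : (0:ℝ)^2 = 0 := by norm_num
        rw [h0, sub_zero, mul_one] at hd
        linarith
      rw [div_pow, div_add_div _ _ hD.ne' (by positivity),
        div_le_div_iff₀ (by positivity) h1t] at hd2
      have h3 : (1+t*γ^2) * ((γ^2*(1+t*γ^2) + r^2)*(1+t)) ≤ (1+t*γ^2) * (1+t*γ^2)^2 := by
        nlinarith [hd2]
      exact le_of_mul_le_mul_left h3 hD
    -- deduce r^2 ≤ γ^2 * (1 - γ^2)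
    have hr2 : r^2 ≤ γ^2*(1-γ^2) := by
      by_contra hcon
      push_neg at hcon
      set ε := r^2 - γ^2*(1-γ^2) with hε
      have hεpos : 0 < ε := by linarith
      set t0 := (|1 - γ^2 - r^2| + 1)/ε with ht0
      have ht0nn : 0 ≤ t0 := by positivity
      have hKt := hK t0 ht0nn
      have ht0e : t0 * ε = |1 - γ^2 - r^2| + 1 := div_mul_cancel₀ _ hεpos.ne'
      have habs : 1 - γ^2 - r^2 ≤ |1 - γ^2 - r^2| := le_abs_self _
      nlinarith [hKt, ht0e, habs]
    -- conclude
    have h1 : (0:ℝ) ≤ 1 - γ^2 := by linarith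
    calc r = Real.sqrt (r^2) := (Real.sqrt_sq hr).symm
      _ ≤ Real.sqrt (γ^2*(1-γ^2)) := Real.sqrt_le_sqrt hr2
      _ = γ * Real.sqrt (1-γ^2) := by
          rw [Real.sqrt_mul (sq_nonneg γ), Real.sqrt_sq hγ0.le]
  · -- backward direction
    intro hrle t ht
    have hD : (0:ℝ) < 1+t*γ^2 := by positivity
    have h1t : (0:ℝ) < 1+t := by linarith
    have hr2 : r^2 ≤ γ^2*(1-γ^2) := by
      have h1 : (0:ℝ) ≤ 1 - γ^2 := by linarith
      have h2 : (γ * Real.sqrt (1-γ^2))^2 = γ^2*(1-γ^2) := by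
        rw [mul_pow, Real.sq_sqrt h1]
      nlinarith [Real.sqrt_nonneg (1-γ^2), hrle, hr]
    rw [hfun t ht]
    apply antitone_of_deriv_nonpos
    · exact fun y => (hderiv t ht y).differentiableAt
    · intro y
      rw [(hderiv t ht y).deriv]
      have hM : γ^2/(1+t*γ^2) + (r/(1+t*γ^2))^2 ≤ 1/(1+t) := by
        rw [div_pow, div_add_div _ _ hD.ne' (by positivity),
          div_le_div_iff₀ (by positivity) h1t]
        nlinarith [mul_nonneg ht (sub_nonneg.mpr hr2), sq_nonneg (1-γ^2), hD.le,
          mul_nonneg ht (sq_nonneg γ), mul_nonneg (mul_nonneg ht ht) (sq_nonneg (γ*γ))]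
      have hT : 0 ≤ Real.tanh ((r/(1+t*γ^2))*y)^2 := sq_nonneg _
      nlinarith [sq_nonneg (r/(1+t*γ^2)), hM, hT,
        mul_nonneg (sq_nonneg (r/(1+t*γ^2))) hT]
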